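/- (Minimum principle) Let U ⊆ V and α > 0. Suppose u : V → ℝ satisfies (L̃ + α)u ≥ 0 on U, the negative part of u restricted to U attains its minimum, and u ≥ 0 on V∖U. Then on each connected component of U, either u ≡ 0 or u > 0; in particular u ≥ 0 on V. -/
import Mathlib


/-- The formal Laplacian `L̃u(x) = (1/m(x)) ∑_y b(x,y)(u(x)-u(y)) + (c(x)/m(x))u(x)`. -/
noncomputable def formalL {V : Type*} (b : V → V → ℝ) (c m : V → ℝ) (u : V → ℝ) (x : V) : ℝ :=
  (1 / m x) * ∑' y, b x y * (u x - u y) + (c x / m x) * u x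

/-- **Minimum principle.** If `(L̃+α)u ≥ 0` on `U`, the negative part of `u`
restricted to `U` attains its minimum, and `u ≥ 0` outside `U`, then on each connected
component of `U` either `u ≡ 0` or `u > 0`; in particular `u ≥ 0` on `V`. -/
theorem minimum_principle
    (V : Type*) [Countable V] (m : V → ℝ) (hm : ∀ x, 0 < m x)
    (b : V → V → ℝ) (c : V → ℝ)
    (hb_symm : ∀ x y, b x y = b y x) (hb_nonneg : ∀ x y, 0 ≤ b x y)
    (hb_diag : ∀ x, b x x = 0) (hb_sum : ∀ x, Summable fun y => b x y)
    (hc : ∀ x, 0 ≤ c x)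
    (U : Set V) (α : ℝ) (hα : 0 < α) (u : V → ℝ)
    (hdom : ∀ x, Summable fun y => b x y * |u y|)
    (hsuper : ∀ x ∈ U, 0 ≤ formalL b c m u x + α * u x)
    (hmin : ∃ x₀ ∈ U, ∀ y ∈ U, min (u x₀) 0 ≤ min (u y) 0)
    (hout : ∀ x, x ∉ U → 0 ≤ u x) :
    (∀ x, 0 ≤ u x) ∧
      ∀ x ∈ U,
        (∀ y, Relation.ReflTransGen (fun a a' => a ∈ U ∧ a' ∈ U ∧ 0 < b a a') x y → u y = 0) ∨
        (∀ y, Relation.ReflTransGen (fun a a' => a ∈ U ∧ a' ∈ U ∧ 0 < b a a') x y → 0 < u y) := by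
  -- Step 1: u ≥ 0 everywhere.
  have key : ∀ x, 0 ≤ u x := by
    by_contra hcon
    push_neg at hcon
    obtain ⟨x, hx⟩ := hcon
    have hxU : x ∈ U := by
      by_contra hxU
      exact absurd (hout x hxU) (not_le.2 hx)
    obtain ⟨x₀, hx₀U, hx₀min⟩ := hmin
    have hneg : u x₀ < 0 := by
      have h1 := hx₀min x hxU
      have h2 : min (u x) 0 ≤ u x := min_le_left _ _
      have h3 : min (u x₀) 0 < 0 := by linarith
      rcases min_lt_iff.mp h3 with h | h
      · exact h
      · exact absurd h (lt_irrefl 0)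
    have hle : ∀ y, u x₀ ≤ u y := by
      intro y
      by_cases hy : y ∈ U
      · calc u x₀ = min (u x₀) 0 := (min_eq_left hneg.le).symm
          _ ≤ min (u y) 0 := hx₀min y hy
          _ ≤ u y := min_le_left _ _
      · exact hneg.le.trans (hout y hy)
    have hS : (∑' y, b x₀ y * (u x₀ - u y)) ≤ 0 :=
      tsum_nonpos fun y =>
        mul_nonpos_iff.mpr (Or.inl ⟨hb_nonneg _ _, by linarith [hle y]⟩)
    have h1 := hsuper x₀ hx₀U
    unfold formalL at h1
    have hm0 : 0 < (1 : ℝ) / m x₀ := one_div_pos.mpr (hm x₀)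
    have t1 : (1 / m x₀) * (∑' y, b x₀ y * (u x₀ - u y)) ≤ 0 :=
      mul_nonpos_iff.mpr (Or.inl ⟨hm0.le, hS⟩)
    have t2 : (c x₀ / m x₀) * u x₀ ≤ 0 :=
      mul_nonpos_iff.mpr (Or.inl ⟨div_nonneg (hc x₀) (hm x₀).le, hneg.le⟩)
    have t3 : α * u x₀ < 0 := mul_neg_of_pos_of_neg hα hneg
    linarith
  -- Zero propagation: if u vanishes at a point of U, it vanishes at all its neighbors.
  have zprop : ∀ x ∈ U, u x = 0 → ∀ y, 0 < b x y → u y = 0 := by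
    intro x hxU hux y hby
    have hsum : Summable fun z => b x z * u z := by
      refine (hdom x).congr fun z => ?_
      rw [abs_of_nonneg (key z)]
    have h1 := hsuper x hxU
    unfold formalL at h1
    have hT : (∑' z, b x z * (u x - u z)) = -∑' z, b x z * u z := by
      rw [← tsum_neg]
      congr 1
      funext z
      rw [hux]; ring
    rw [hT, hux] at h1
    simp only [mul_zero, add_zero] at h1
    have hm0 : 0 < (1 : ℝ) / m x := one_div_pos.mpr (hm x)
    have hTnn : 0 ≤ ∑' z, b x z * u z :=
      tsum_nonneg fun z => mul_nonneg (hb_nonneg _ _) (key z)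
    have hT0 : (∑' z, b x z * u z) = 0 := by
      by_contra hne
      have hpos : 0 < ∑' z, b x z * u z := lt_of_le_of_ne hTnn (Ne.symm hne)
      nlinarith [mul_pos hm0 hpos]
    have hterm : b x y * u y ≤ 0 := by
      have := Summable.le_tsum hsum y fun z _ => mul_nonneg (hb_nonneg _ _) (key z)
      linarith [hT0 ▸ this]
    have hterm0 : b x y * u y = 0 :=
      le_antisymm hterm (mul_nonneg (hb_nonneg _ _) (key y))
    rcases mul_eq_zero.mp hterm0 with h | h
    · exact absurd h hby.ne'
    · exact h
  refine ⟨key, fun x hxU => ?_⟩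
  by_cases hx0 : u x = 0
  · left
    intro y hxy
    induction hxy with
    | refl => exact hx0
    | tail _ hbc ih => exact zprop _ hbc.1 ih _ hbc.2.2
  · right
    intro y hxy
    induction hxy with
    | refl => exact (key x).lt_of_ne (Ne.symm hx0)
    | @tail p q _ hbc ih =>
      rcases (key q).lt_or_eq with h | h
      · exact h
      · exact absurd (zprop q hbc.2.1 h.symm p (by rw [hb_symm]; exact hbc.2.2)) ih.ne'
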